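/- Let ℓ, u, v be positive integers with u ≤ v, and let r₁,…,r_u and s₁,…,s_v be positive integers with r₁+⋯+r_u = ℓ and s₁+⋯+s_v = ℓ. Set S := Σ_{i=1}^{u} Σ_{j=1}^{v} (r_i + s_j − 2·gcd(r_i,s_j)). Then S ≥ ℓ(v − u). -/
import Mathlib


/-- **Lemma 2.13(1)**: if `r₁ + ⋯ + r_u = ℓ = s₁ + ⋯ + s_v` with all terms positive and
`u ≤ v`, then `S := Σᵢ Σⱼ (rᵢ + sⱼ − 2·gcd(rᵢ,sⱼ))` satisfies `S ≥ ℓ(v − u)`. -/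
theorem statement5 (ℓ u v : ℕ) (hℓ : 0 < ℓ) (hu : 0 < u) (hv : 0 < v) (huv : u ≤ v)
    (r : Fin u → ℕ) (s : Fin v → ℕ)
    (hr : ∀ i, 0 < r i) (hs : ∀ j, 0 < s j)
    (hrsum : ∑ i, r i = ℓ) (hssum : ∑ j, s j = ℓ) :
    (ℓ : ℤ) * ((v : ℤ) - (u : ℤ)) ≤
      ∑ i, ∑ j, ((r i : ℤ) + (s j : ℤ) - 2 * (Nat.gcd (r i) (s j) : ℤ)) := by
  have hrZ : ∑ i, (r i : ℤ) = (ℓ : ℤ) := by exact_mod_cast hrsum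
  have hsZ : ∑ j, (s j : ℤ) = (ℓ : ℤ) := by exact_mod_cast hssum
  have hg : ∑ i, ∑ j, (Nat.gcd (r i) (s j) : ℤ) ≤ (u : ℤ) * ℓ := by
    calc ∑ i, ∑ j, (Nat.gcd (r i) (s j) : ℤ)
        ≤ ∑ i : Fin u, ∑ j, (s j : ℤ) := by
          refine Finset.sum_le_sum fun i _ => Finset.sum_le_sum fun j _ => ?_
          exact_mod_cast Nat.gcd_le_right _ (hs j)
      _ = (u : ℤ) * ℓ := by simp [hsZ, mul_comm]
  have key : ∑ i, ∑ j, ((r i : ℤ) + (s j : ℤ) - 2 * (Nat.gcd (r i) (s j) : ℤ))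
      = (v : ℤ) * ℓ + (u : ℤ) * ℓ - 2 * ∑ i, ∑ j, (Nat.gcd (r i) (s j) : ℤ) := by
    simp only [Finset.sum_sub_distrib, Finset.sum_add_distrib, Finset.sum_const,
      Finset.card_univ, Fintype.card_fin, nsmul_eq_mul, hrZ, hsZ]
    rw [← Finset.mul_sum, hrZ, Finset.mul_sum]
    ring_nf
    simp [Finset.sum_mul]
  rw [key]
  nlinarith
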